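/- Let A and B be Hermitian positive definite n×n matrices. Then the smallest eigenvalue of G(A,B) is at least the geometric mean of the smallest eigenvalues of A and B, i.e. λ_min(G(A,B)) ≥ sqrt(λ_min(A) · λ_min(B)). -/

import Mathlib

open Matrix
open scoped ComplexOrder Classical

/-- Square root of a matrix: the unique PSD square root when `M` is positive
semidefinite, junk value `0` otherwise. -/
noncomputable def msqrt {m : Type*} [Fintype m] [DecidableEq m] (M : Matrix m m ℂ) :
    Matrix m m ℂ :=
  if h : M.PosSemidef then (h.1.eigenvectorUnitary : Matrix m m ℂ) *
    diagonal ((↑) ∘ Real.sqrt ∘ h.1.eigenvalues) * (star h.1.eigenvectorUnitary : Matrix m m ℂ)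
  else 0

lemma msqrt_psd {m : Type*} [Fintype m] [DecidableEq m] {M : Matrix m m ℂ}
    (h : M.PosSemidef) : (msqrt M).PosSemidef := by
  rw [msqrt, dif_pos h]
  have hd : (diagonal (((↑) ∘ Real.sqrt ∘ h.1.eigenvalues : m → ℂ))).PosSemidef :=
    posSemidef_diagonal_iff.mpr fun i => Complex.zero_le_real.mpr (Real.sqrt_nonneg _)
  simpa [Matrix.star_eq_conjTranspose] using
    hd.mul_mul_conjTranspose_same (h.1.eigenvectorUnitary : Matrix m m ℂ)

lemma msqrt_mul_self {m : Type*} [Fintype m] [DecidableEq m] {M : Matrix m m ℂ}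
    (h : M.PosSemidef) : msqrt M * msqrt M = M := by
  rw [msqrt, dif_pos h]
  set U := (h.1.eigenvectorUnitary : Matrix m m ℂ) with hU
  have hUU : star U * U = 1 := (Matrix.mem_unitaryGroup_iff').mp h.1.eigenvectorUnitary.2
  have hspec : M = U * diagonal (RCLike.ofReal ∘ h.1.eigenvalues) * star U := by
    rw [hU]; exact h.1.spectral_theorem.trans (Unitary.conjStarAlgAut_apply _ _)
  have hD : diagonal (((↑) ∘ Real.sqrt ∘ h.1.eigenvalues : m → ℂ)) *
      diagonal (((↑) ∘ Real.sqrt ∘ h.1.eigenvalues : m → ℂ))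
      = diagonal (RCLike.ofReal ∘ h.1.eigenvalues) := by
    rw [diagonal_mul_diagonal]
    congr 1
    ext i
    simp only [Function.comp_apply]
    rw [← Complex.ofReal_mul, Real.mul_self_sqrt (h.eigenvalues_nonneg i)]
    rfl
  conv_rhs => rw [hspec]
  calc U * diagonal (((↑) ∘ Real.sqrt ∘ h.1.eigenvalues : m → ℂ)) * star U *
        (U * diagonal (((↑) ∘ Real.sqrt ∘ h.1.eigenvalues : m → ℂ)) * star U)
      = U * diagonal (((↑) ∘ Real.sqrt ∘ h.1.eigenvalues : m → ℂ)) * (star U * U) *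
        diagonal (((↑) ∘ Real.sqrt ∘ h.1.eigenvalues : m → ℂ)) * star U := by
        simp only [Matrix.mul_assoc]
    _ = _ := by rw [hUU, Matrix.mul_one, Matrix.mul_assoc U, hD]

/-- The matrix geometric mean `G(A,B) = A^{1/2} (A^{-1/2} B A^{-1/2})^{1/2} A^{1/2}`. -/
noncomputable def matGM {m : Type*} [Fintype m] [DecidableEq m] (A B : Matrix m m ℂ) :
    Matrix m m ℂ :=
  msqrt A * msqrt ((msqrt A)⁻¹ * B * (msqrt A)⁻¹) * msqrt A

/-- Smallest eigenvalue of a Hermitian matrix (junk value `0` otherwise). -/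
noncomputable def lmin {m : Type*} [Fintype m] [DecidableEq m] (M : Matrix m m ℂ) : ℝ :=
  if h : M.IsHermitian then ⨅ i, h.eigenvalues i else 0

/-- Largest eigenvalue of a Hermitian matrix (junk value `0` otherwise). -/
noncomputable def lmax {m : Type*} [Fintype m] [DecidableEq m] (M : Matrix m m ℂ) : ℝ :=
  if h : M.IsHermitian then ⨆ i, h.eigenvalues i else 0

lemma psd_smul {m : Type*} [Fintype m] {M : Matrix m m ℂ} (hM : M.PosSemidef)
    {c : ℝ} (hc : 0 ≤ c) : ((c : ℂ) • M).PosSemidef := by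
  refine posSemidef_iff_dotProduct_mulVec.mpr ⟨?_, fun x => ?_⟩
  · unfold Matrix.IsHermitian
    rw [conjTranspose_smul, hM.1.eq]
    congr 1
    simp
  · rw [smul_mulVec, dotProduct_smul, smul_eq_mul]
    exact mul_nonneg (by exact_mod_cast hc) (hM.dotProduct_mulVec_nonneg x)

lemma sub_smul_one_psd {m : Type*} [Fintype m] [DecidableEq m] {A : Matrix m m ℂ}
    (hA : A.IsHermitian) {a : ℝ} (ha : ∀ i, a ≤ hA.eigenvalues i) :
    (A - (a : ℂ) • 1).PosSemidef := by
  set U := (hA.eigenvectorUnitary : Matrix m m ℂ) with hUdef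
  have hUU : U * star U = 1 := (Matrix.mem_unitaryGroup_iff).mp hA.eigenvectorUnitary.2
  have hdiag : diagonal (RCLike.ofReal ∘ hA.eigenvalues) - (a : ℂ) • 1
      = diagonal (fun i => ((hA.eigenvalues i - a : ℝ) : ℂ)) := by
    rw [← diagonal_one, ← diagonal_smul, diagonal_sub]
    ext i
    simp
  have key : A - (a : ℂ) • 1
      = U * (diagonal (RCLike.ofReal ∘ hA.eigenvalues) - (a : ℂ) • 1) * star U := by
    rw [mul_sub, sub_mul, hUdef, ← Unitary.conjStarAlgAut_apply (S := ℂ), ← hA.spectral_theorem]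
    congr 1
    rw [mul_smul_comm, mul_one, smul_mul_assoc, hUU]
  rw [key, hdiag]
  have : (diagonal (fun i => ((hA.eigenvalues i - a : ℝ) : ℂ))).PosSemidef :=
    posSemidef_diagonal_iff.mpr fun i => Complex.zero_le_real.mpr (by linarith [ha i])
  simpa [Matrix.star_eq_conjTranspose] using this.mul_mul_conjTranspose_same U

theorem stmt7 {n : ℕ} (hn : 0 < n) {A B : Matrix (Fin n) (Fin n) ℂ}
    (hA : A.PosDef) (hB : B.PosDef) :
    Real.sqrt (lmin A * lmin B) ≤ lmin (matGM A B) := by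
  have hAH := hA.isHermitian
  have hBH := hB.isHermitian
  have : Nonempty (Fin n) := ⟨⟨0, hn⟩⟩
  have bdd : ∀ (f : Fin n → ℝ), BddBelow (Set.range f) := fun f => (Set.finite_range f).bddBelow
  set a := lmin A with hadef
  set b := lmin B with hbdef
  have ha_le : ∀ i, a ≤ hAH.eigenvalues i := by
    intro i; rw [hadef, lmin, dif_pos hAH]; exact ciInf_le (bdd _) i
  have hb_le : ∀ i, b ≤ hBH.eigenvalues i := by
    intro i; rw [hbdef, lmin, dif_pos hBH]; exact ciInf_le (bdd _) i
  have ha_pos : 0 < a := by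
    obtain ⟨i, -, hi⟩ := Finset.exists_min_image Finset.univ hAH.eigenvalues
      ⟨⟨0, hn⟩, Finset.mem_univ _⟩
    have : a = hAH.eigenvalues i := by
      rw [hadef, lmin, dif_pos hAH]
      exact le_antisymm (ciInf_le (bdd _) i) (le_ciInf fun j => hi j (Finset.mem_univ _))
    rw [this]; exact hA.eigenvalues_pos i
  have hb_pos : 0 < b := by
    obtain ⟨i, -, hi⟩ := Finset.exists_min_image Finset.univ hBH.eigenvalues
      ⟨⟨0, hn⟩, Finset.mem_univ _⟩
    have : b = hBH.eigenvalues i := by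
      rw [hbdef, lmin, dif_pos hBH]
      exact le_antisymm (ciInf_le (bdd _) i) (le_ciInf fun j => hi j (Finset.mem_univ _))
    rw [this]; exact hB.eigenvalues_pos i
  -- the square root S of A
  set S := msqrt A with hSdef
  have hS_psd : S.PosSemidef := msqrt_psd hA.posSemidef
  have hSH : S.IsHermitian := hS_psd.1
  have hS2 : S * S = A := msqrt_mul_self hA.posSemidef
  have hSdet : IsUnit S.det := by
    have hmul : S.det * S.det = A.det := by rw [← det_mul, hS2]
    refine isUnit_iff_ne_zero.mpr fun h => ?_
    rw [h, mul_zero] at hmul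
    exact hA.det_pos.ne' hmul.symm
  have hSinvH : S⁻¹.IsHermitian := hSH.inv
  have hAinv : A⁻¹ = S⁻¹ * S⁻¹ := by rw [← hS2, Matrix.mul_inv_rev]
  -- the matrix C = S⁻¹ B S⁻¹ and its square root T
  set C := S⁻¹ * B * S⁻¹ with hCdef
  have hC_psd : C.PosSemidef := by
    have h := hB.posSemidef.conjTranspose_mul_mul_same S⁻¹
    rwa [hSinvH.eq] at h
  set T := msqrt C with hTdef
  have hT_psd : T.PosSemidef := msqrt_psd hC_psd
  have hT2 : T * T = C := msqrt_mul_self hC_psd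
  set G := S * T * S with hGdef
  have hGeq : matGM A B = G := by rw [matGM, ← hSdef, ← hCdef, ← hTdef, ← hGdef]
  have hG_psd : G.PosSemidef := by
    have h := hT_psd.conjTranspose_mul_mul_same S
    rwa [hSH.eq] at h
  have hGH := hG_psd.1
  -- Riccati equation : G A⁻¹ G = B
  have hric : G * A⁻¹ * G = B := by
    rw [hGdef, hAinv]
    simp only [Matrix.mul_assoc]
    rw [Matrix.nonsing_inv_mul_cancel_left S _ hSdet, Matrix.mul_nonsing_inv_cancel_left S _ hSdet]
    rw [← Matrix.mul_assoc T T S, hT2, hCdef]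
    simp only [Matrix.mul_assoc]
    rw [Matrix.mul_nonsing_inv_cancel_left S _ hSdet, Matrix.nonsing_inv_mul S hSdet, mul_one]
  -- 1 - a A⁻¹ is PSD
  have h1 : (1 - (a : ℂ) • A⁻¹).PosSemidef := by
    have h := (sub_smul_one_psd hAH ha_le).conjTranspose_mul_mul_same S⁻¹
    rw [hSinvH.eq] at h
    have he : S⁻¹ * (A - (a : ℂ) • 1) * S⁻¹ = 1 - (a : ℂ) • A⁻¹ := by
      rw [mul_sub, sub_mul, mul_smul_comm, mul_one, smul_mul_assoc, hAinv, ← hS2]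
      congr 1
      rw [Matrix.nonsing_inv_mul_cancel_left S S hSdet, Matrix.mul_nonsing_inv S hSdet]
    rwa [he] at h
  -- G * G - a • B is PSD
  have h2 : (G * G - (a : ℂ) • B).PosSemidef := by
    have h := h1.conjTranspose_mul_mul_same G
    rw [hGH.eq] at h
    have he : G * (1 - (a : ℂ) • A⁻¹) * G = G * G - (a : ℂ) • B := by
      rw [mul_sub, sub_mul, mul_one, mul_smul_comm, smul_mul_assoc, hric]
    rwa [he] at h
  -- G * G - a b • 1 is PSD
  have h4 : (G * G - ((a * b : ℝ) : ℂ) • 1).PosSemidef := by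
    have h3 := psd_smul (sub_smul_one_psd hBH hb_le) ha_pos.le
    have he : G * G - ((a * b : ℝ) : ℂ) • 1
        = (G * G - (a : ℂ) • B) + (a : ℂ) • (B - (b : ℂ) • 1) := by
      rw [smul_sub, smul_smul]
      push_cast
      abel
    rw [he]
    exact h2.add h3
  -- conclude
  rw [hGeq, lmin, dif_pos hGH]
  refine le_ciInf fun i => ?_
  set v : Fin n → ℂ := ⇑(hGH.eigenvectorBasis i) with hvdef
  set lam := hGH.eigenvalues i with hldef
  have hv : G *ᵥ v = lam • v := hGH.mulVec_eigenvectorBasis i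
  have hvv : star v ⬝ᵥ v = 1 := by
    have h2 := EuclideanSpace.inner_eq_star_dotProduct (𝕜 := ℂ)
      (hGH.eigenvectorBasis i) (hGH.eigenvectorBasis i)
    rw [inner_self_eq_norm_sq_to_K, hGH.eigenvectorBasis.orthonormal.1 i] at h2
    rw [hvdef, dotProduct_comm]
    simpa using h2.symm
  have hquad := h4.dotProduct_mulVec_nonneg v
  have hmv : (G * G - ((a * b : ℝ) : ℂ) • 1) *ᵥ v
      = (lam * lam : ℝ) • v - ((a * b : ℝ) : ℂ) • v := by
    rw [sub_mulVec, smul_mulVec, one_mulVec, ← Matrix.mulVec_mulVec, hv, mulVec_smul, hv,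
      smul_smul]
  rw [hmv, dotProduct_sub, dotProduct_smul, dotProduct_smul, hvv] at hquad
  have hreal : (a * b : ℝ) ≤ lam * lam := by
    have : (0 : ℂ) ≤ ((lam * lam - a * b : ℝ) : ℂ) := by
      push_cast
      convert hquad using 1
      simp [smul_eq_mul]
    have := Complex.zero_le_real.mp this
    linarith
  have hlam_nonneg : 0 ≤ lam := hG_psd.eigenvalues_nonneg i
  calc Real.sqrt (a * b) ≤ Real.sqrt (lam * lam) := Real.sqrt_le_sqrt hreal
    _ = lam := Real.sqrt_mul_self hlam_nonneg
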